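/- arXiv:math/0601573 — 2 statements merged into one kernel-verified Lean document; each statement's English description precedes it below -/
import Mathlib

section
/- With the above notation, let χ be any R-valued function on finitely supported functions n : ℕ≥1 → ℕ satisfying: χ(0) = 1; χ(n + 2·1_m) = ((c_m + o_m(n))² − (m·n(m))²)·χ(n) whenever n(j) = 0 for all j > m; and χ(n + 1_m) = (c_m + o_m(n))·χ(n) whenever n(j) = 0 for all j ≥ m. Then χ(n) = P(n) for every finitely supported n; i.e., the two recurrences and the normalization determine the explicit product formula. -/
/-- `o_m(n) = ∑_{k ≥ 1, 2^k ∣ m} (m/2^k) · n(m/2^k)`. -/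
def oFun (n : ℕ →₀ ℕ) (m : ℕ) : ℕ :=
  ∑ k ∈ (Finset.Icc 1 m).filter (fun k => 2 ^ k ∣ m), (m / 2 ^ k) * n (m / 2 ^ k)

lemma oFun_congr {n n' : ℕ →₀ ℕ} (l : ℕ) (h : ∀ j, j < l → n j = n' j) :
    oFun n l = oFun n' l := by
  unfold oFun
  refine Finset.sum_congr rfl fun k hk => ?_
  simp only [Finset.mem_filter, Finset.mem_Icc] at hk
  have hl : 0 < l := lt_of_lt_of_le (Nat.lt_of_lt_of_le Nat.zero_lt_one hk.1.1) hk.1.2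
  have : l / 2 ^ k < l := Nat.div_lt_self hl (Nat.one_lt_two_pow_iff.2 (by omega))
  rw [h _ this]

lemma oFun_add_single (n : ℕ →₀ ℕ) (m t l : ℕ) (hl : l ≤ m) :
    oFun (n + Finsupp.single m t) l = oFun n l := by
  refine oFun_congr l fun j hj => ?_
  simp [Finsupp.single_apply, Ne.symm (by omega : j ≠ m)]


/-- The explicit product
`P(n) = ∏_{l : n(l) ≥ 1} (c_l + o_l(n)) · ∏_{i=0}^{n(l)−2} (c_l + o_l(n) + l·(n(l)−2−2i))`. -/
def Pfun {R : Type*} [CommRing R] (c : ℕ → R) (n : ℕ →₀ ℕ) : R :=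
  ∏ l ∈ n.support,
    (c l + (oFun n l : R)) *
      ∏ i ∈ Finset.range (n l - 1),
        (c l + (oFun n l : R) + (((l : ℤ) * ((n l : ℤ) - 2 - 2 * (i : ℤ)) : ℤ) : R))

def Ffun {R : Type*} [CommRing R] (c : ℕ → R) (n : ℕ →₀ ℕ) (l : ℕ) : R :=
  if n l = 0 then 1 else
    (c l + (oFun n l : R)) *
      ∏ i ∈ Finset.range (n l - 1),
        (c l + (oFun n l : R) + (((l : ℤ) * ((n l : ℤ) - 2 - 2 * (i : ℤ)) : ℤ) : R))

lemma Ffun_add_two {R : Type*} [CommRing R] (c : ℕ → R) (n : ℕ →₀ ℕ) (m : ℕ) :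
    Ffun c (n + Finsupp.single m 2) m =
      ((c m + (oFun n m : R)) ^ 2 - ((m : R) * (n m : R)) ^ 2) * Ffun c n m := by
  have hval : (n + Finsupp.single m 2 : ℕ →₀ ℕ) m = n m + 2 := by
    rw [Finsupp.add_apply, Finsupp.single_apply, if_pos rfl]
  have ho : oFun (n + Finsupp.single m 2) m = oFun n m := oFun_add_single n m 2 m le_rfl
  set C : R := c m + (oFun n m : R) with hC
  set g : ℕ → R := fun i => C + (((m : ℤ) * ((n m : ℤ) - 2 * (i : ℤ)) : ℤ) : R) with hg
  have key : Ffun c (n + Finsupp.single m 2) m = C * ∏ i ∈ Finset.range (n m + 1), g i := by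
    rw [Ffun, hval, ho, if_neg (by omega : ¬(n m + 2 = 0))]
    congr 1
    refine Finset.prod_congr rfl fun i _ => ?_
    simp only [hg, hC]
    push_cast
    ring
  rcases Nat.eq_zero_or_pos (n m) with h0 | hpos
  · rw [key, Ffun, if_pos h0, h0]
    have hg0 : g 0 = C := by simp [hg, h0]
    simp only [zero_add, Finset.prod_range_one, hg0]
    push_cast
    ring
  · obtain ⟨b, hb⟩ : ∃ b, n m = b + 1 := ⟨n m - 1, by omega⟩
    have hold : Ffun c n m = C * ∏ i ∈ Finset.range b, g (i + 1) := by
      rw [Ffun, hb, if_neg (by omega : ¬(b + 1 = 0))]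
      congr 1
      refine Finset.prod_congr rfl fun i _ => ?_
      simp only [hg, hC, hb]
      push_cast
      ring
    rw [key, hold, hb]
    rw [show b + 1 + 1 = b + 2 from rfl, Finset.prod_range_succ',
      Finset.prod_range_succ (fun i => g (i + 1)) b]
    have hg0 : g 0 = C + (m : R) * ((n m : R)) := by
      simp only [hg, hb]; push_cast; ring
    have hgb : g (b + 1) = C - (m : R) * ((n m : R)) := by
      simp only [hg, hb]; push_cast; ring
    rw [hg0, hgb, hb]
    push_cast
    ring

lemma Ffun_add_one {R : Type*} [CommRing R] (c : ℕ → R) (n : ℕ →₀ ℕ) (m : ℕ)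
    (hm : n m = 0) :
    Ffun c (n + Finsupp.single m 1) m = (c m + (oFun n m : R)) * Ffun c n m := by
  have hval : (n + Finsupp.single m 1 : ℕ →₀ ℕ) m = 1 := by
    rw [Finsupp.add_apply, Finsupp.single_apply, if_pos rfl, hm]
  have ho : oFun (n + Finsupp.single m 1) m = oFun n m := oFun_add_single n m 1 m le_rfl
  rw [Ffun, hval, ho, if_neg (by omega : ¬(1 = 0)), Ffun, if_pos hm]
  simp

lemma Pfun_eq_prod {R : Type*} [CommRing R] (c : ℕ → R) (n : ℕ →₀ ℕ)
    (s : Finset ℕ) (hs : n.support ⊆ s) : Pfun c n = ∏ l ∈ s, Ffun c n l := by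
  rw [Pfun, ← Finset.prod_subset hs (fun x _ hx => by
    simp only [Ffun, if_pos (Finsupp.notMem_support_iff.1 hx)])]
  exact Finset.prod_congr rfl fun l hl => by
    simp only [Ffun, if_neg (Finsupp.mem_support_iff.1 hl)]

lemma support_add_single_subset (n : ℕ →₀ ℕ) (m t : ℕ) :
    (n + Finsupp.single m t).support ⊆ insert m n.support := by
  refine Finsupp.support_add.trans ?_
  rw [Finset.union_subset_iff]
  exact ⟨Finset.subset_insert _ _,
    (Finsupp.support_single_subset).trans (by simp)⟩

lemma Ffun_add_single_ne {R : Type*} [CommRing R] (c : ℕ → R) (n : ℕ →₀ ℕ) (m t l : ℕ)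
    (hne : l ≠ m) (hle : l ≤ m) :
    Ffun c (n + Finsupp.single m t) l = Ffun c n l := by
  have happ : (n + Finsupp.single m t : ℕ →₀ ℕ) l = n l := by
    rw [Finsupp.add_apply, Finsupp.single_apply, if_neg (Ne.symm hne), add_zero]
  rw [Ffun, Ffun, happ, oFun_add_single n m t l hle]

lemma prod_erase_eq {R : Type*} [CommRing R] (c : ℕ → R) (n : ℕ →₀ ℕ) (m t : ℕ)
    (htop : ∀ j, m < j → n j = 0) :
    ∏ l ∈ n.support.erase m, Ffun c (n + Finsupp.single m t) l
      = ∏ l ∈ n.support.erase m, Ffun c n l := by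
  refine Finset.prod_congr rfl fun l hl => ?_
  obtain ⟨hne, hmem⟩ := Finset.mem_erase.1 hl
  have hle : l ≤ m := by
    by_contra h
    exact (Finsupp.mem_support_iff.1 hmem) (htop l (by omega))
  exact Ffun_add_single_ne c n m t l hne hle

lemma Pfun_split {R : Type*} [CommRing R] (c : ℕ → R) (n : ℕ →₀ ℕ) (m t : ℕ) :
    Pfun c (n + Finsupp.single m t)
      = Ffun c (n + Finsupp.single m t) m * ∏ l ∈ n.support.erase m,
          Ffun c (n + Finsupp.single m t) l := by
  rw [Pfun_eq_prod c _ (insert m n.support) (support_add_single_subset n m t),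
    ← Finset.mul_prod_erase _ _ (Finset.mem_insert_self m n.support),
    Finset.erase_insert_eq_erase]

lemma Pfun_split' {R : Type*} [CommRing R] (c : ℕ → R) (n : ℕ →₀ ℕ) (m : ℕ) :
    Pfun c n = Ffun c n m * ∏ l ∈ n.support.erase m, Ffun c n l := by
  rw [Pfun_eq_prod c n (insert m n.support) (Finset.subset_insert _ _),
    ← Finset.mul_prod_erase _ _ (Finset.mem_insert_self m n.support),
    Finset.erase_insert_eq_erase]

lemma Pfun_add_two {R : Type*} [CommRing R] (c : ℕ → R) (n : ℕ →₀ ℕ) (m : ℕ)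
    (htop : ∀ j, m < j → n j = 0) :
    Pfun c (n + Finsupp.single m 2)
      = ((c m + (oFun n m : R)) ^ 2 - ((m : R) * (n m : R)) ^ 2) * Pfun c n := by
  rw [Pfun_split c n m 2, prod_erase_eq c n m 2 htop, Ffun_add_two,
    Pfun_split' c n m, mul_assoc]

lemma Pfun_add_one {R : Type*} [CommRing R] (c : ℕ → R) (n : ℕ →₀ ℕ) (m : ℕ)
    (htop : ∀ j, m < j → n j = 0) (hm : n m = 0) :
    Pfun c (n + Finsupp.single m 1) = (c m + (oFun n m : R)) * Pfun c n := by
  rw [Pfun_split c n m 1, prod_erase_eq c n m 1 htop, Ffun_add_one c n m hm,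
    Pfun_split' c n m, mul_assoc]

/-- Any function `χ` on finitely supported multiplicity functions (supported on
positive integers) satisfying `χ(0) = 1` together with the two recurrences
`χ(n + 2·1_m) = ((c_m + o_m(n))² − (m·n(m))²)·χ(n)` (whenever `n(j) = 0` for `j > m`)
and `χ(n + 1_m) = (c_m + o_m(n))·χ(n)` (whenever `n(j) = 0` for `j ≥ m`)
coincides with the explicit product `P`. -/
theorem chi_eq_Pfun {R : Type*} [CommRing R] (c : ℕ → R) (χ : (ℕ →₀ ℕ) → R)
    (hzero : χ 0 = 1)
    (hrec2 : ∀ n : ℕ →₀ ℕ, n 0 = 0 → ∀ m : ℕ, 1 ≤ m → (∀ j, m < j → n j = 0) →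
      χ (n + Finsupp.single m 2) =
        ((c m + (oFun n m : R)) ^ 2 - ((m : R) * (n m : R)) ^ 2) * χ n)
    (hrec1 : ∀ n : ℕ →₀ ℕ, n 0 = 0 → ∀ m : ℕ, 1 ≤ m → (∀ j, m ≤ j → n j = 0) →
      χ (n + Finsupp.single m 1) = (c m + (oFun n m : R)) * χ n) :
    ∀ n : ℕ →₀ ℕ, n 0 = 0 → χ n = Pfun c n := by
  have hzeroP : χ 0 = Pfun c 0 := by
    rw [hzero, Pfun]; simp
  have hsum_add : ∀ (g : ℕ →₀ ℕ) (m t : ℕ),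
      ((g + Finsupp.single m t).sum fun _ v => v) = (g.sum fun _ v => v) + t := by
    intro g m t
    rw [Finsupp.sum_add_index' (fun _ => rfl) (fun _ _ _ => rfl),
      Finsupp.sum_single_index rfl]
  suffices H : ∀ N (n : ℕ →₀ ℕ), (n.sum fun _ v => v) ≤ N → n 0 = 0 → χ n = Pfun c n from
    fun n hn => H _ n le_rfl hn
  intro N
  induction N with
  | zero =>
    intro n hsum hn0
    have hn : n = 0 := by
      ext j
      by_contra hj
      have hj' : j ∈ n.support := Finsupp.mem_support_iff.2 (by simpa using hj)
      have h2 : n j ≤ ∑ l ∈ n.support, n l :=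
        Finset.single_le_sum (fun _ _ => Nat.zero_le _) hj'
      have h3 : ∑ l ∈ n.support, n l ≤ 0 := by rw [Finsupp.sum] at hsum; exact hsum
      simp only [Finsupp.coe_zero, Pi.zero_apply] at hj
      omega
    rw [hn]; exact hzeroP
  | succ N ih =>
    intro n hsum hn0
    by_cases hne : n = 0
    · rw [hne]; exact hzeroP
    · have hsupp : n.support.Nonempty := Finsupp.support_nonempty_iff.2 hne
      set m := n.support.max' hsupp with hm
      have hmmem : m ∈ n.support := Finset.max'_mem _ _
      have hm0 : n m ≠ 0 := Finsupp.mem_support_iff.1 hmmem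
      have hm1 : 1 ≤ m := by
        rcases Nat.eq_zero_or_pos m with h | h
        · exact absurd (h ▸ hm0) (by simp [hn0])
        · exact h
      have htop : ∀ j, m < j → n j = 0 := by
        intro j hj
        by_contra h
        exact absurd (Finset.le_max' _ j (Finsupp.mem_support_iff.2 h)) (not_le.2 hj)
      rcases (by omega : n m = 1 ∨ 2 ≤ n m) with hc | hc
      · -- use hrec1
        set n' := n.erase m with hn'
        have hn'eq : n' + Finsupp.single m 1 = n := by
          rw [hn', ← hc]; exact Finsupp.erase_add_single m n
        have hn'0 : n' 0 = 0 := by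
          rw [hn', Finsupp.erase_apply, if_neg (by omega : (0:ℕ) ≠ m)]; exact hn0
        have htop' : ∀ j, m ≤ j → n' j = 0 := by
          intro j hj
          rcases eq_or_lt_of_le hj with h | h
          · rw [hn', ← h, Finsupp.erase_apply, if_pos rfl]
          · rw [hn', Finsupp.erase_apply, if_neg (by omega : j ≠ m)]; exact htop j h
        have hsum' : (n'.sum fun _ v => v) ≤ N := by
          have := hsum_add n' m 1
          rw [hn'eq] at this
          omega
        rw [← hn'eq, hrec1 n' hn'0 m hm1 htop', ih n' hsum' hn'0,
          Pfun_add_one c n' m (fun j hj => htop' j (le_of_lt hj)) (htop' m le_rfl)]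
      · -- use hrec2
        set n' := n.erase m + Finsupp.single m (n m - 2) with hn'
        have hn'eq : n' + Finsupp.single m 2 = n := by
          rw [hn', add_assoc, ← Finsupp.single_add, Nat.sub_add_cancel hc,
            Finsupp.erase_add_single]
        have hn'0 : n' 0 = 0 := by
          rw [hn', Finsupp.add_apply, Finsupp.erase_apply, if_neg (by omega : (0:ℕ) ≠ m),
            Finsupp.single_apply, if_neg (by omega : ¬ m = 0), hn0]
          rfl
        have htop' : ∀ j, m < j → n' j = 0 := by
          intro j hj
          rw [hn', Finsupp.add_apply, Finsupp.erase_apply, if_neg (by omega : j ≠ m),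
            Finsupp.single_apply, if_neg (by omega : ¬ m = j), htop j hj]
          rfl
        have hsum' : (n'.sum fun _ v => v) ≤ N := by
          have := hsum_add n' m 2
          rw [hn'eq] at this
          omega
        rw [← hn'eq, hrec2 n' hn'0 m hm1 htop', ih n' hsum' hn'0,
          Pfun_add_two c n' m htop']
end

section
/- For every real t with 0 < t and t ≠ 1, the function f(u) = ((−u·t + √(1 + u²·t))/(1 − t)) · exp(arsinh(u·√t)/√t) satisfies f(0) = 1/(1 − t), and for every integer n ≥ 1 its n-th derivative at 0 equals ∏_{i=0}^{⌊(n−3)/2⌋} (1 − (n−3−2i)²·t), the product being empty (equal to 1) when n ≤ 2. (This is the super Poincaré series form of the extended cycle index Z⁺_Λ: the coefficient of uⁿ/n! is the Poincaré polynomial of \overline{M_{0,n}}(ℝ).) -/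
open Real Finset

noncomputable def gfun (t : ℝ) : ℝ → ℝ :=
  fun u => Real.exp (Real.arsinh (u * Real.sqrt t) / Real.sqrt t)

lemma Rpos (t : ℝ) (ht : 0 < t) (u : ℝ) : 0 < 1 + u ^ 2 * t := by
  nlinarith [sq_nonneg u, mul_nonneg (sq_nonneg u) ht.le]

lemma gfun_contDiff (t : ℝ) : ContDiff ℝ ((⊤ : ℕ∞) : WithTop ℕ∞) (gfun t) :=
  (((contDiff_id.mul contDiff_const).arsinh).div_const _).exp

lemma gfun_hasDerivAt (t : ℝ) (ht : 0 < t) (u : ℝ) :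
    HasDerivAt (gfun t) (gfun t u / Real.sqrt (1 + u ^ 2 * t)) u := by
  have hs : (0:ℝ) < Real.sqrt t := Real.sqrt_pos.2 ht
  have hst : Real.sqrt t ^ 2 = t := Real.sq_sqrt ht.le
  have h1 : HasDerivAt (fun u : ℝ => u * Real.sqrt t) (Real.sqrt t) u := by
    simpa using (hasDerivAt_id u).mul_const (Real.sqrt t)
  have h4 := (((Real.hasDerivAt_arsinh (u * Real.sqrt t)).comp u h1).div_const
    (Real.sqrt t)).exp
  have hsq : (u * Real.sqrt t) ^ 2 = u ^ 2 * t := by rw [mul_pow, hst]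
  have hRpos := Rpos t ht u
  refine h4.congr_deriv ?_
  rw [hsq]
  simp only [gfun, Function.comp_apply]
  field_simp [gfun]

lemma R_hasDerivAt (t : ℝ) (ht : 0 < t) (u : ℝ) :
    HasDerivAt (fun u : ℝ => Real.sqrt (1 + u ^ 2 * t))
      (u * t / Real.sqrt (1 + u ^ 2 * t)) u := by
  have hpos := Rpos t ht u
  have h1 : HasDerivAt (fun u : ℝ => 1 + u ^ 2 * t) (2 * u * t) u := by
    have := ((hasDerivAt_pow 2 u).mul_const t).const_add 1
    simpa [mul_comm, mul_assoc, mul_left_comm] using this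
  have := (Real.hasDerivAt_sqrt hpos.ne').comp u h1
  refine this.congr_deriv ?_
  field_simp

lemma iter_hasDerivAt (t : ℝ) (n : ℕ) (u : ℝ) :
    HasDerivAt (iteratedDeriv n (gfun t)) (iteratedDeriv (n + 1) (gfun t) u) u := by
  have h := (gfun_contDiff t).differentiable_iteratedDeriv n
    (by exact_mod_cast (WithTop.coe_lt_top n : (n:ℕ∞) < ⊤))
  rw [iteratedDeriv_succ]
  exact (h u).hasDerivAt

lemma deriv_gfun (t : ℝ) (ht : 0 < t) :
    deriv (gfun t) = fun u => gfun t u / Real.sqrt (1 + u ^ 2 * t) :=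
  funext fun u => (gfun_hasDerivAt t ht u).deriv

lemma ode_rec (t : ℝ) (ht : 0 < t) (n : ℕ) (u : ℝ) :
    (1 + u ^ 2 * t) * iteratedDeriv (n + 2) (gfun t) u =
      (1 - (n : ℝ) ^ 2 * t) * iteratedDeriv n (gfun t) u
        - (2 * (n : ℝ) + 1) * u * t * iteratedDeriv (n + 1) (gfun t) u := by
  induction n generalizing u with
  | zero =>
    have hRpos := Rpos t ht u
    have hRne : Real.sqrt (1 + u ^ 2 * t) ≠ 0 := (Real.sqrt_pos.2 hRpos).ne'
    have hR2 : Real.sqrt (1 + u ^ 2 * t) ^ 2 = 1 + u ^ 2 * t := Real.sq_sqrt hRpos.le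
    have h2 : HasDerivAt (fun u => gfun t u / Real.sqrt (1 + u ^ 2 * t))
        ((gfun t u / Real.sqrt (1 + u ^ 2 * t) * Real.sqrt (1 + u ^ 2 * t)
          - gfun t u * (u * t / Real.sqrt (1 + u ^ 2 * t))) / Real.sqrt (1 + u ^ 2 * t) ^ 2) u :=
      (gfun_hasDerivAt t ht u).div (R_hasDerivAt t ht u) hRne
    have hD2 : iteratedDeriv 2 (gfun t) u =
        (gfun t u / Real.sqrt (1 + u ^ 2 * t) * Real.sqrt (1 + u ^ 2 * t)
          - gfun t u * (u * t / Real.sqrt (1 + u ^ 2 * t))) / Real.sqrt (1 + u ^ 2 * t) ^ 2 := by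
      rw [show (2:ℕ) = 1 + 1 from rfl, iteratedDeriv_succ, iteratedDeriv_one, deriv_gfun t ht]
      exact h2.deriv
    have hD1 : iteratedDeriv 1 (gfun t) u = gfun t u / Real.sqrt (1 + u ^ 2 * t) := by
      rw [iteratedDeriv_one, deriv_gfun t ht]
    rw [hD2, hD1, iteratedDeriv_zero, ← hR2]
    simp only [Real.sqrt_sq (Real.sqrt_nonneg _)]
    push_cast
    field_simp
    ring
  | succ n ih =>
    have hFG : (fun u => (1 + u ^ 2 * t) * iteratedDeriv (n + 2) (gfun t) u)
        = fun u => (1 - (n : ℝ) ^ 2 * t) * iteratedDeriv n (gfun t) u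
            - (2 * (n : ℝ) + 1) * u * t * iteratedDeriv (n + 1) (gfun t) u := funext fun u => ih u
    have hq : HasDerivAt (fun u : ℝ => 1 + u ^ 2 * t) (2 * u * t) u := by
      have := ((hasDerivAt_pow 2 u).mul_const t).const_add 1
      simpa [mul_comm, mul_assoc, mul_left_comm] using this
    have hF : HasDerivAt (fun u => (1 + u ^ 2 * t) * iteratedDeriv (n + 2) (gfun t) u)
        (2 * u * t * iteratedDeriv (n + 2) (gfun t) u
          + (1 + u ^ 2 * t) * iteratedDeriv (n + 3) (gfun t) u) u :=
      hq.mul (iter_hasDerivAt t (n + 2) u)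
    have hc : HasDerivAt (fun u : ℝ => (2 * (n : ℝ) + 1) * u * t) ((2 * (n : ℝ) + 1) * t) u := by
      have := ((hasDerivAt_id u).const_mul (2 * (n : ℝ) + 1)).mul_const t
      simpa [mul_assoc] using this
    have hG : HasDerivAt (fun u => (1 - (n : ℝ) ^ 2 * t) * iteratedDeriv n (gfun t) u
          - (2 * (n : ℝ) + 1) * u * t * iteratedDeriv (n + 1) (gfun t) u)
        ((1 - (n : ℝ) ^ 2 * t) * iteratedDeriv (n + 1) (gfun t) u
          - ((2 * (n : ℝ) + 1) * t * iteratedDeriv (n + 1) (gfun t) u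
            + (2 * (n : ℝ) + 1) * u * t * iteratedDeriv (n + 2) (gfun t) u)) u :=
      ((iter_hasDerivAt t n u).const_mul _).sub (hc.mul (iter_hasDerivAt t (n + 1) u))
    have hEq : 2 * u * t * iteratedDeriv (n + 2) (gfun t) u
          + (1 + u ^ 2 * t) * iteratedDeriv (n + 3) (gfun t) u
        = (1 - (n : ℝ) ^ 2 * t) * iteratedDeriv (n + 1) (gfun t) u
          - ((2 * (n : ℝ) + 1) * t * iteratedDeriv (n + 1) (gfun t) u
            + (2 * (n : ℝ) + 1) * u * t * iteratedDeriv (n + 2) (gfun t) u) := by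
      rw [← hF.deriv, ← hG.deriv, hFG]
    have h3 : n + 1 + 2 = n + 3 := by ring
    rw [h3]
    push_cast
    linear_combination hEq

lemma rec0 (t : ℝ) (ht : 0 < t) (n : ℕ) :
    iteratedDeriv (n + 2) (gfun t) 0 = (1 - (n : ℝ) ^ 2 * t) * iteratedDeriv n (gfun t) 0 := by
  have h := ode_rec t ht n 0
  simpa using h

lemma g0 (t : ℝ) : gfun t 0 = 1 := by simp [gfun]

lemma D0 (t : ℝ) : iteratedDeriv 0 (gfun t) 0 = 1 := by simp [g0]

lemma D1 (t : ℝ) (ht : 0 < t) : iteratedDeriv 1 (gfun t) 0 = 1 := by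
  rw [iteratedDeriv_one, deriv_gfun t ht]
  simp [g0]

lemma vals (t : ℝ) (ht : 0 < t) : ∀ m : ℕ,
    iteratedDeriv (m + 2) (gfun t) 0 =
      ∏ i ∈ Finset.range (m / 2 + 1), (1 - ((m : ℝ) - 2 * i) ^ 2 * t) := by
  intro m
  induction m using Nat.strong_induction_on with
  | _ m ih =>
    match m with
    | 0 => rw [rec0 t ht 0]; simp [D0]
    | 1 => rw [rec0 t ht 1, D1 t ht]; norm_num
    | (m + 2) =>
      rw [rec0 t ht (m + 2), ih m (by omega)]
      have h2 : (m + 2) / 2 + 1 = (m / 2 + 1) + 1 := by omega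
      conv_rhs => rw [h2, Finset.prod_range_succ']
      rw [mul_comm]
      congr 1
      · apply Finset.prod_congr rfl
        intro i _
        push_cast
        ring
      · push_cast
        ring

/-- For `0 < t`, `t ≠ 1`, the function
`f(u) = ((−u·t + √(1 + u²·t))/(1 − t)) · exp(arsinh(u·√t)/√t)` satisfies
`f(0) = 1/(1−t)`, and for every `n ≥ 1` its `n`-th derivative at `0` equals
`∏_{i=0}^{⌊(n−3)/2⌋} (1 − (n−3−2i)²·t)`, the product being empty (equal to `1`)
when `n ≤ 2`. -/
theorem extended_cycle_index_coeffs (t : ℝ) (ht : 0 < t) (ht1 : t ≠ 1) :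
    let f : ℝ → ℝ := fun u =>
      ((-u * t + Real.sqrt (1 + u ^ 2 * t)) / (1 - t)) *
        Real.exp (Real.arsinh (u * Real.sqrt t) / Real.sqrt t)
    f 0 = 1 / (1 - t) ∧
    ∀ n : ℕ, 1 ≤ n → iteratedDeriv n f 0 =
      if n ≤ 2 then 1
      else ∏ i ∈ Finset.range ((n - 3) / 2 + 1), (1 - ((n : ℝ) - 3 - 2 * i) ^ 2 * t) := by
  intro f
  constructor
  · show ((-0 * t + Real.sqrt (1 + 0 ^ 2 * t)) / (1 - t)) *
        Real.exp (Real.arsinh (0 * Real.sqrt t) / Real.sqrt t) = 1 / (1 - t)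
    simp
  · intro n hn
    have hf' : ∀ u, HasDerivAt f (gfun t u) u := by
      intro u
      have hRpos := Rpos t ht u
      have hRne : Real.sqrt (1 + u ^ 2 * t) ≠ 0 := (Real.sqrt_pos.2 hRpos).ne'
      have h1t : (1 : ℝ) - t ≠ 0 := sub_ne_zero.mpr (Ne.symm ht1)
      have hA : HasDerivAt (fun u : ℝ => -u * t + Real.sqrt (1 + u ^ 2 * t))
          (-t + u * t / Real.sqrt (1 + u ^ 2 * t)) u := by
        have h1 : HasDerivAt (fun u : ℝ => -u * t) (-t) u := by
          simpa using ((hasDerivAt_id u).neg.mul_const t)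
        exact h1.add (R_hasDerivAt t ht u)
      have h := (hA.div_const (1 - t)).mul (gfun_hasDerivAt t ht u)
      have : HasDerivAt (fun u : ℝ => ((-u * t + Real.sqrt (1 + u ^ 2 * t)) / (1 - t)) * gfun t u)
          (gfun t u) u := by
        refine h.congr_deriv ?_
        field_simp
        ring
      exact this
    have hderiv : deriv f = gfun t := funext fun u => (hf' u).deriv
    obtain ⟨k, rfl⟩ : ∃ k, n = k + 1 := ⟨n - 1, by omega⟩
    rw [iteratedDeriv_succ', hderiv]
    match k with
    | 0 => rw [if_pos (by norm_num)]; exact D0 t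
    | 1 => rw [if_pos (by norm_num)]; exact D1 t ht
    | (m + 2) =>
      rw [vals t ht m, if_neg (by omega)]
      have h3 : (m + 2 + 1 - 3) / 2 + 1 = m / 2 + 1 := by omega
      rw [h3]
      apply Finset.prod_congr rfl
      intro i _
      push_cast
      ring
end
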